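/- Let μ be a nonadditive measure that is either autocontinuous from below or satisfies the pseudometric generating property. Let 0 < p,q < ∞. If f, g are measurable with (f - g)_{p,q} > 0, then there exists r > 0 such that the spheres S(f,r) = {h : (f-h)_{p,q} < r} and S(g,r) = {h : (g-h)_{p,q} < r} are disjoint. -/

import Mathlib

open scoped NNReal ENNReal
open ENNReal Filter Topology

variable {X : Type*} [MeasurableSpace X]

/-- The Sugeno integral of `g` w.r.t. a nonadditive measure `μ`:
`Su(μ,g) := sup_{t ∈ [0,∞)} min(t, μ({g > t}))`. -/
noncomputable def Su (μ : Set X → ℝ≥0∞) (g : X → ℝ≥0∞) : ℝ≥0∞ :=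
  ⨆ t : ℝ≥0, min (t : ℝ≥0∞) (μ {x | (t : ℝ≥0∞) < g x})

/-- The Sugeno-Lorentz prenorm `(f)_{p,q} := (Su(μ^{p/q}, (p/q)|f|^q))^{1/q}`. -/
noncomputable def SL (μ : Set X → ℝ≥0∞) (p q : ℝ) (f : X → ℝ) : ℝ≥0∞ :=
  (Su (fun A => μ A ^ (p / q)) (fun x => ENNReal.ofReal ((p / q) * |f x| ^ q))) ^ (1 / q)

/-- If `μ` is autocontinuous from below or satisfies the pseudometric generating property,
and `(f-g)_{p,q} > 0`, then the spheres `S(f,r)` and `S(g,r)` are disjoint for some `r > 0`. -/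
theorem spheres_disjoint
    (μ : Set X → ℝ≥0∞) (h0 : μ ∅ = 0)
    (hmono : ∀ ⦃A B : Set X⦄, MeasurableSet A → MeasurableSet B → A ⊆ B → μ A ≤ μ B)
    (hac : (∀ (A : Set X) (B : ℕ → Set X), MeasurableSet A → (∀ n, MeasurableSet (B n)) →
        Tendsto (fun n => μ (B n)) atTop (𝓝 0) →
        Tendsto (fun n => μ (A \ B n)) atTop (𝓝 (μ A))) ∨
      (∀ A B : ℕ → Set X, (∀ n, MeasurableSet (A n)) → (∀ n, MeasurableSet (B n)) →
        Tendsto (fun n => max (μ (A n)) (μ (B n))) atTop (𝓝 0) →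
        Tendsto (fun n => μ (A n ∪ B n)) atTop (𝓝 0)))
    (p q : ℝ) (hp : 0 < p) (hq : 0 < q)
    (f g : X → ℝ) (hf : Measurable f) (hg : Measurable g)
    (hfg : 0 < SL μ p q (f - g)) :
    ∃ r : ℝ≥0∞, 0 < r ∧
      ∀ h : X → ℝ, Measurable h →
        ¬ (SL μ p q (f - h) < r ∧ SL μ p q (g - h) < r) := by
  by_contra hcon
  push_neg at hcon
  have hc : 0 < p / q := div_pos hp hq
  have hq1 : (0:ℝ) < 1 / q := by positivity
  have e : ∀ x : ℝ≥0∞, (x ^ (1/q)) ^ q = x := fun x => by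
    rw [← ENNReal.rpow_mul, one_div, inv_mul_cancel₀ hq.ne', ENNReal.rpow_one]
  have epq : (p/q) * (q/p) = 1 := by field_simp
  -- measurability of level sets
  have msetG : ∀ (F : X → ℝ), Measurable F → ∀ v : ℝ≥0∞,
      MeasurableSet {x | v < ENNReal.ofReal ((p/q) * |F x| ^ q)} := fun F hF v =>
    measurableSet_lt measurable_const
      (ENNReal.measurable_ofReal.comp (measurable_const.mul (hF.abs.pow measurable_const)))
  -- Step 1: get a level t with positive measure
  have hSu : 0 < Su (fun A => μ A ^ (p/q))
      (fun x => ENNReal.ofReal ((p/q) * |(f - g) x| ^ q)) := by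
    by_contra hz
    push_neg at hz
    rw [le_zero_iff] at hz
    simp only [SL] at hfg
    rw [hz, ENNReal.zero_rpow_of_pos hq1] at hfg
    exact lt_irrefl _ hfg
  rw [Su] at hSu
  obtain ⟨t, ht⟩ := lt_iSup_iff.mp hSu
  have htpos : 0 < t := by
    have := lt_of_lt_of_le ht (min_le_left _ _)
    exact_mod_cast this
  set A := {x | (t:ℝ≥0∞) < ENNReal.ofReal ((p/q) * |(f - g) x| ^ q)} with hAdef
  have hμA : 0 < μ A := by
    have h2 := lt_of_lt_of_le ht (min_le_right _ _)
    by_contra hz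
    push_neg at hz
    rw [le_zero_iff] at hz
    rw [hz, ENNReal.zero_rpow_of_pos hc] at h2
    exact lt_irrefl _ h2
  have hAmeas : MeasurableSet A := msetG _ (hf.sub hg) t
  -- threshold t'
  have h2q : (0:ℝ) < 2 ^ q := Real.rpow_pos_of_pos two_pos q
  set t' : ℝ≥0 := ((t:ℝ) / 2 ^ q).toNNReal with ht'def
  have ht'coe : (t':ℝ) = (t:ℝ) / 2 ^ q := Real.coe_toNNReal _ (by positivity)
  have ht'pos : 0 < t' := by
    rw [← NNReal.coe_pos, ht'coe]
    have : (0:ℝ) < (t:ℝ) := by exact_mod_cast htpos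
    positivity
  -- radii
  set u : ℕ → ℝ≥0 := fun n => min t' ((((n:ℝ≥0)+1)⁻¹) ^ (p/q)) with hu
  have hupos : ∀ n, 0 < u n := fun n =>
    lt_min ht'pos (NNReal.rpow_pos (by positivity))
  choose h hmeas hfh hgh using fun n =>
    hcon (((u n : ℝ≥0∞)) ^ (1/q))
      (ENNReal.rpow_pos (by exact_mod_cast hupos n) ENNReal.coe_ne_top)
  -- key Chebyshev bound
  have key : ∀ (F : X → ℝ), Measurable F → ∀ n, SL μ p q F < ((u n : ℝ≥0∞)) ^ (1/q) →
      μ {x | (t':ℝ≥0∞) < ENNReal.ofReal ((p/q) * |F x| ^ q)} ≤ ((n:ℝ≥0∞)+1)⁻¹ := by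
    intro F hF n hlt
    have h2 := ENNReal.rpow_lt_rpow hlt hq
    simp only [SL] at h2
    rw [e, e] at h2
    -- h2 : Su ... < u n
    set S := {x | ((u n : ℝ≥0∞)) < ENNReal.ofReal ((p/q) * |F x| ^ q)} with hSdef
    have hmin : min ((u n : ℝ≥0∞)) ((μ S) ^ (p/q)) ≤
        Su (fun A => μ A ^ (p/q)) (fun x => ENNReal.ofReal ((p/q) * |F x| ^ q)) := by
      rw [Su]
      exact le_iSup (fun s : ℝ≥0 => min (s:ℝ≥0∞)
        ((μ {x | (s:ℝ≥0∞) < ENNReal.ofReal ((p/q) * |F x| ^ q)}) ^ (p/q))) (u n)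
    have hν : (μ S) ^ (p/q) < (u n : ℝ≥0∞) := by
      have hmm := lt_of_le_of_lt hmin h2
      by_contra hge
      push_neg at hge
      rw [min_eq_left hge] at hmm
      exact lt_irrefl _ hmm
    have hμS : μ S < ((u n : ℝ≥0∞)) ^ (q/p) := by
      have h3 := ENNReal.rpow_lt_rpow hν (div_pos hq hp)
      rwa [← ENNReal.rpow_mul, epq, ENNReal.rpow_one] at h3
    have hub : ((u n : ℝ≥0∞)) ^ (q/p) ≤ ((n:ℝ≥0∞)+1)⁻¹ := by
      have h1 : (u n : ℝ≥0∞) ≤ (((((n:ℝ≥0)+1)⁻¹) ^ (p/q) : ℝ≥0) : ℝ≥0∞) := by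
        have h1' : u n ≤ (((n:ℝ≥0)+1)⁻¹) ^ (p/q) := min_le_right _ _
        exact_mod_cast h1'
      calc ((u n : ℝ≥0∞)) ^ (q/p)
          ≤ (((((n:ℝ≥0)+1)⁻¹) ^ (p/q) : ℝ≥0) : ℝ≥0∞) ^ (q/p) :=
            ENNReal.rpow_le_rpow h1 (by positivity)
        _ = ((n:ℝ≥0∞)+1)⁻¹ := by
            rw [ENNReal.coe_rpow_of_nonneg _ hc.le, ← ENNReal.rpow_mul, epq,
              ENNReal.rpow_one, ENNReal.coe_inv (by positivity)]
            norm_cast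
            rw [ENNReal.coe_inv (by positivity), ENNReal.coe_natCast]
    have hut : (u n : ℝ≥0∞) ≤ (t' : ℝ≥0∞) := by
      have hut' : u n ≤ t' := min_le_left _ _
      exact_mod_cast hut'
    have hsub : {x | (t':ℝ≥0∞) < ENNReal.ofReal ((p/q) * |F x| ^ q)} ⊆ S := by
      intro x hx
      simp only [Set.mem_setOf_eq] at hx
      simp only [hSdef, Set.mem_setOf_eq]
      exact lt_of_le_of_lt hut hx
    exact le_trans (hmono (msetG F hF t') (msetG F hF _) hsub) (le_trans hμS.le hub)
  set An : ℕ → Set X := fun n =>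
    {x | (t':ℝ≥0∞) < ENNReal.ofReal ((p/q) * |(f - h n) x| ^ q)} with hAn_def
  set Bn : ℕ → Set X := fun n =>
    {x | (t':ℝ≥0∞) < ENNReal.ofReal ((p/q) * |(g - h n) x| ^ q)} with hBn_def
  have hAn : ∀ n, μ (An n) ≤ ((n:ℝ≥0∞)+1)⁻¹ := fun n => key _ (hf.sub (hmeas n)) n (hfh n)
  have hBn : ∀ n, μ (Bn n) ≤ ((n:ℝ≥0∞)+1)⁻¹ := fun n => key _ (hg.sub (hmeas n)) n (hgh n)
  have hAnmeas : ∀ n, MeasurableSet (An n) := fun n => msetG _ (hf.sub (hmeas n)) t'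
  have hBnmeas : ∀ n, MeasurableSet (Bn n) := fun n => msetG _ (hg.sub (hmeas n)) t'
  -- inclusion A ⊆ An n ∪ Bn n
  have hincl : ∀ n, A ⊆ An n ∪ Bn n := by
    intro n x hx
    have hx' : (t:ℝ) < (p/q) * |(f - g) x| ^ q := by
      rw [hAdef, Set.mem_setOf_eq, ← ENNReal.ofReal_coe_nnreal,
        ENNReal.ofReal_lt_ofReal_iff_of_nonneg t.coe_nonneg] at hx
      exact hx
    have main : ∀ y : ℝ, |(f - g) x| / 2 ≤ |y| →
        (t':ℝ≥0∞) < ENNReal.ofReal ((p/q) * |y| ^ q) := by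
      intro y hy
      rw [← ENNReal.ofReal_coe_nnreal,
        ENNReal.ofReal_lt_ofReal_iff_of_nonneg t'.coe_nonneg, ht'coe]
      have h1 : (|(f - g) x| / 2) ^ q ≤ |y| ^ q :=
        Real.rpow_le_rpow (by positivity) hy hq.le
      have h2 : (|(f - g) x| / 2) ^ q = |(f - g) x| ^ q / 2 ^ q :=
        Real.div_rpow (abs_nonneg _) (by norm_num) q
      have h3 : (t:ℝ) / 2 ^ q < ((p/q) * |(f - g) x| ^ q) / 2 ^ q := by gcongr
      calc (t:ℝ) / 2 ^ q < (p/q) * |(f - g) x| ^ q / 2 ^ q := h3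
        _ = (p/q) * ((|(f - g) x| / 2) ^ q) := by rw [h2]; ring
        _ ≤ (p/q) * |y| ^ q := by
            exact mul_le_mul_of_nonneg_left h1 hc.le
    have habs : |(f - g) x| / 2 ≤ |(f - h n) x| ∨ |(f - g) x| / 2 ≤ |(g - h n) x| := by
      by_contra hno
      push_neg at hno
      obtain ⟨hn1, hn2⟩ := hno
      simp only [Pi.sub_apply] at hn1 hn2
      have htri : |f x - g x| ≤ |f x - h n x| + |g x - h n x| := by
        have := abs_sub_le (f x) (h n x) (g x)
        rw [abs_sub_comm (h n x) (g x)] at this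
        exact this
      linarith
    rcases habs with hcase | hcase
    · exact Or.inl (main _ hcase)
    · exact Or.inr (main _ hcase)
  -- tendsto helper
  have htend : ∀ (S : ℕ → Set X), (∀ n, μ (S n) ≤ ((n:ℝ≥0∞)+1)⁻¹) →
      Tendsto (fun n => μ (S n)) atTop (𝓝 0) := by
    intro S hS
    refine tendsto_of_tendsto_of_tendsto_of_le_of_le tendsto_const_nhds
      ENNReal.tendsto_inv_nat_nhds_zero (fun n => zero_le) (fun n => ?_)
    refine le_trans (hS n) ?_
    gcongr
    exact le_self_add
  rcases hac with hAC | hPGP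
  · have h1 := hAC A Bn hAmeas hBnmeas (htend _ hBn)
    have h2 : Tendsto (fun n => μ (A \ Bn n)) atTop (𝓝 0) := by
      refine tendsto_of_tendsto_of_tendsto_of_le_of_le tendsto_const_nhds
        (htend _ hAn) (fun n => zero_le) (fun n => ?_)
      refine hmono (hAmeas.diff (hBnmeas n)) (hAnmeas n) ?_
      intro x hx
      rcases hincl n hx.1 with hmem | hmem
      · exact hmem
      · exact absurd hmem hx.2
    exact hμA.ne' (tendsto_nhds_unique h1 h2)
  · have h1 : Tendsto (fun n => μ (An n ∪ Bn n)) atTop (𝓝 0) := by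
      refine hPGP An Bn hAnmeas hBnmeas ?_
      simpa using (htend _ hAn).max (htend _ hBn)
    have h2 : ∀ n, μ A ≤ μ (An n ∪ Bn n) := fun n =>
      hmono hAmeas ((hAnmeas n).union (hBnmeas n)) (hincl n)
    exact hμA.not_ge (ge_of_tendsto h1 (Eventually.of_forall h2))
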